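/- For every fixed α > 0 and N ∈ ℕ, the van Cittert deconvolution symbol is asymptotically equivalent to (N+1)(1 + α²|k|²)/(α²|k|²) at large wave numbers: the ratio D̂_{N,α}(k) · α²|k|² / ((N+1)(1 + α²|k|²)) tends to 1 as |k| → ∞. -/

import Mathlib

/-- The van Cittert deconvolution symbol `D̂_{N,α}(k)`. -/
noncomputable def vanCittertSymbol (α : ℝ) (N : ℕ) (k : EuclideanSpace ℝ (Fin 3)) : ℝ :=
  ∑ n ∈ Finset.range (N + 1), (α ^ 2 * ‖k‖ ^ 2 / (1 + α ^ 2 * ‖k‖ ^ 2)) ^ n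

lemma ratio_tendsto_one : Filter.Tendsto (fun t : ℝ => t / (1 + t)) Filter.atTop (nhds 1) := by
  have h0 : Filter.Tendsto (fun t : ℝ => (1 + t)⁻¹) Filter.atTop (nhds 0) :=
    tendsto_inv_atTop_zero.comp
      (Filter.tendsto_atTop_add_const_left Filter.atTop 1 Filter.tendsto_id)
  have h1 : Filter.Tendsto (fun t : ℝ => 1 - (1 + t)⁻¹) Filter.atTop (nhds (1 - 0)) :=
    Filter.Tendsto.sub tendsto_const_nhds h0
  rw [sub_zero] at h1
  refine h1.congr' ?_
  filter_upwards [Filter.eventually_gt_atTop (0:ℝ)] with t ht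
  have hne : (1:ℝ) + t ≠ 0 := by linarith
  field_simp
  ring

/-- Asymptotic equivalence `D̂_{N,α}(k) ≈ (N+1)(1 + α²|k|²)/(α²|k|²)` at large
wave numbers: the ratio of the two sides tends to `1` as `|k| → ∞`. -/
theorem vanCittertSymbol_asymptotics (α : ℝ) (hα : 0 < α) (N : ℕ) :
    Filter.Tendsto
      (fun k : EuclideanSpace ℝ (Fin 3) =>
        vanCittertSymbol α N k * (α ^ 2 * ‖k‖ ^ 2) /
          (((N : ℝ) + 1) * (1 + α ^ 2 * ‖k‖ ^ 2)))
      (Filter.comap (fun k : EuclideanSpace ℝ (Fin 3) => ‖k‖) Filter.atTop)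
      (nhds 1) := by
  set h : ℝ → ℝ := fun r => (∑ n ∈ Finset.range (N + 1), r ^ n) * r / ((N : ℝ) + 1) with hh
  have hcont : Continuous h := by
    apply Continuous.div_const
    exact (continuous_finset_sum _ fun n _ => continuous_pow n).mul continuous_id
  have hval : h 1 = 1 := by
    simp only [hh, one_pow, Finset.sum_const, Finset.card_range, nsmul_eq_mul, mul_one,
      Nat.cast_add, Nat.cast_one]
    exact div_self (by positivity)
  have hr : Filter.Tendsto (fun s : ℝ => α ^ 2 * s ^ 2 / (1 + α ^ 2 * s ^ 2))
      Filter.atTop (nhds 1) := by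
    have ht : Filter.Tendsto (fun s : ℝ => α ^ 2 * s ^ 2) Filter.atTop Filter.atTop :=
      (Filter.tendsto_pow_atTop (by norm_num)).const_mul_atTop (by positivity)
    exact ratio_tendsto_one.comp ht
  have hmain : Filter.Tendsto
      (fun s : ℝ => h (α ^ 2 * s ^ 2 / (1 + α ^ 2 * s ^ 2))) Filter.atTop (nhds 1) := by
    have := (hcont.tendsto 1).comp hr
    rwa [hval] at this
  have hcomp := hmain.comp (Filter.tendsto_comap
    (f := fun k : EuclideanSpace ℝ (Fin 3) => ‖k‖))
  refine hcomp.congr fun k => ?_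
  simp only [Function.comp, hh, vanCittertSymbol]
  rw [← mul_div_assoc, div_div, mul_comm (1 + α ^ 2 * ‖k‖ ^ 2)]
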